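/- Let n ∈ ℕ and let Q₀ be a quadratic form on ℚ^n that takes integer values on ℤ^n. Let μ₀ ∈ ℚ^n be such that the polar bilinear form B of Q₀ satisfies B(μ₀,λ) ∈ ℤ for all λ ∈ ℤ^n, and let m ∈ ℚ with m − Q₀(μ₀) ∈ ℤ. For a prime p and ν ∈ ℕ, let N be the number of tuples (λ, x₁, y₁, x₂, y₂), where λ ∈ ℤ^n has all coordinates in {0,…,p^ν−1} and x₁, y₁, x₂, y₂ ∈ {0,…,p^ν−1}, such that Q₀(λ+μ₀) + x₁·y₁ + x₂·y₂ − m is an integer divisible by p^ν. Then (1 − p^{−2})·p^{(n+3)ν} ≤ N ≤ (1 + p^{−1})·p^{(n+3)ν}. -/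

import Mathlib

private noncomputable def gcount (M : ℕ) (c : ZMod M) : ℕ :=
  Nat.card {q : ZMod M × ZMod M × ZMod M × ZMod M // q.1 * q.2.1 + q.2.2.1 * q.2.2.2 = c}

private lemma card_split {α : Type*} [Finite α] (P R : α → Prop) :
    Nat.card {a // P a} = Nat.card {a // P a ∧ R a} + Nat.card {a // P a ∧ ¬ R a} := by
  classical
  rw [← Nat.card_sum]
  refine Nat.card_congr ?_
  exact (((Equiv.sumCompl fun s : {a // P a} => R s.1).symm).trans
    (Equiv.sumCongr (Equiv.subtypeSubtypeEquivSubtypeInter P R)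
      (Equiv.subtypeSubtypeEquivSubtypeInter P (fun a => ¬ R a))))

-- x₁ unit count
private lemma card_unit1 (M : ℕ) [NeZero M] (c : ZMod M) :
    Nat.card {q : ZMod M × ZMod M × ZMod M × ZMod M //
      (q.1 * q.2.1 + q.2.2.1 * q.2.2.2 = c) ∧ IsUnit q.1} = M.totient * (M * M) := by
  have key := (Nat.card_eq_of_bijective
    (f := fun u : (ZMod M)ˣ × ZMod M × ZMod M =>
      (⟨((u.1 : ZMod M), (u.1⁻¹ : (ZMod M)ˣ) * (c - u.2.1 * u.2.2), u.2.1, u.2.2),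
        by
          constructor
          · have h : ((u.1 : ZMod M) * ((u.1⁻¹ : (ZMod M)ˣ) : ZMod M)) = 1 := u.1.mul_inv
            linear_combination (c - u.2.1 * u.2.2) * h
          · exact u.1.isUnit⟩ :
        {q : ZMod M × ZMod M × ZMod M × ZMod M //
          (q.1 * q.2.1 + q.2.2.1 * q.2.2.2 = c) ∧ IsUnit q.1})) ?_)
  · rw [← key, Nat.card_prod, Nat.card_prod, Nat.card_zmod, Nat.card_eq_fintype_card,
      ZMod.card_units_eq_totient]
  constructor
  · rintro ⟨u, x₂, y₂⟩ ⟨u', x₂', y₂'⟩ h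
    simp only [Subtype.mk.injEq, Prod.mk.injEq] at h
    obtain ⟨h1, _, h3, h4⟩ := h
    exact Prod.ext (Units.ext h1) (Prod.ext h3 h4)
  · rintro ⟨⟨x₁, y₁, x₂, y₂⟩, hsol, hx⟩
    simp only at hsol hx
    obtain ⟨u, hu⟩ := hx
    subst hu
    refine ⟨(u, x₂, y₂), ?_⟩
    have h : ((u⁻¹ : (ZMod M)ˣ) : ZMod M) * (u : ZMod M) = 1 := u.inv_mul
    have hy : ((u⁻¹ : (ZMod M)ˣ) : ZMod M) * (c - x₂ * y₂) = y₁ := by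
      linear_combination ((u⁻¹ : (ZMod M)ˣ) : ZMod M) * hsol.symm + y₁ * h
    exact Subtype.ext (by simp [hy])

private lemma zmod_natCast_val_self {M : ℕ} [NeZero M] (x : ZMod M) : ((x.val : ℕ) : ZMod M) = x := by
  rw [ZMod.natCast_val, ZMod.cast_id]

private lemma card_isUnit (M : ℕ) [NeZero M] :
    Nat.card {x : ZMod M // IsUnit x} = M.totient := by
  have key := Nat.card_eq_of_bijective
    (f := fun u : (ZMod M)ˣ => (⟨(u : ZMod M), u.isUnit⟩ : {x : ZMod M // IsUnit x})) ?_
  · rw [← key, Nat.card_eq_fintype_card, ZMod.card_units_eq_totient]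
  constructor
  · intro u v h
    exact Units.ext (congrArg Subtype.val h)
  · rintro ⟨x, u, rfl⟩
    exact ⟨u, rfl⟩

private lemma card_nonUnit (M : ℕ) [NeZero M] :
    Nat.card {x : ZMod M // ¬ IsUnit x} = M - M.totient := by
  classical
  have h : Nat.card (ZMod M) = Nat.card {x : ZMod M // IsUnit x} + Nat.card {x : ZMod M // ¬ IsUnit x} := by
    rw [← Nat.card_sum]
    exact Nat.card_congr (Equiv.sumCompl _).symm
  rw [Nat.card_zmod, card_isUnit] at h
  omega

private lemma card_unit2 (M : ℕ) [NeZero M] (c : ZMod M) :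
    Nat.card {q : ZMod M × ZMod M × ZMod M × ZMod M //
      (q.1 * q.2.1 + q.2.2.1 * q.2.2.2 = c) ∧ ¬ IsUnit q.1 ∧ IsUnit q.2.2.1} =
    Nat.card {x : ZMod M // ¬ IsUnit x} * (M.totient * M) := by
  have key := (Nat.card_eq_of_bijective
    (f := fun u : {x : ZMod M // ¬ IsUnit x} × (ZMod M)ˣ × ZMod M =>
      (⟨((u.1 : ZMod M), u.2.2, (u.2.1 : ZMod M), (u.2.1⁻¹ : (ZMod M)ˣ) * (c - (u.1 : ZMod M) * u.2.2)),
        by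
          refine ⟨?_, u.1.2, u.2.1.isUnit⟩
          have h : ((u.2.1 : ZMod M) * ((u.2.1⁻¹ : (ZMod M)ˣ) : ZMod M)) = 1 := u.2.1.mul_inv
          linear_combination (c - (u.1 : ZMod M) * u.2.2) * h⟩ :
        {q : ZMod M × ZMod M × ZMod M × ZMod M //
          (q.1 * q.2.1 + q.2.2.1 * q.2.2.2 = c) ∧ ¬ IsUnit q.1 ∧ IsUnit q.2.2.1})) ?_)
  · rw [← key, Nat.card_prod, Nat.card_prod, Nat.card_eq_fintype_card (α := (ZMod M)ˣ),
      ZMod.card_units_eq_totient, Nat.card_zmod]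
  constructor
  · rintro ⟨x₁, u, y₁⟩ ⟨x₁', u', y₁'⟩ h
    simp only [Subtype.mk.injEq, Prod.mk.injEq] at h
    obtain ⟨h1, h2, h3, _⟩ := h
    exact Prod.ext (Subtype.ext h1) (Prod.ext (Units.ext h3) h2)
  · rintro ⟨⟨x₁, y₁, x₂, y₂⟩, hsol, hx1, hx2⟩
    simp only at hsol hx1 hx2
    obtain ⟨u, hu⟩ := hx2
    subst hu
    refine ⟨(⟨x₁, hx1⟩, u, y₁), ?_⟩
    have h : ((u⁻¹ : (ZMod M)ˣ) : ZMod M) * (u : ZMod M) = 1 := u.inv_mul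
    have hy : ((u⁻¹ : (ZMod M)ˣ) : ZMod M) * (c - x₁ * y₁) = y₂ := by
      linear_combination ((u⁻¹ : (ZMod M)ˣ) : ZMod M) * hsol.symm + y₂ * h
    exact Subtype.ext (by simp [hy])


private lemma nonunit_iff {p : ℕ} (hp : p.Prime) {ν : ℕ} (x : ZMod (p ^ (ν + 1))) :
    ¬ IsUnit x ↔ p ∣ x.val := by
  haveI : NeZero (p ^ (ν + 1)) := ⟨pow_ne_zero _ hp.pos.ne'⟩
  conv_lhs => rw [← zmod_natCast_val_self x]
  rw [ZMod.isUnit_iff_coprime, Nat.coprime_pow_right_iff (Nat.succ_pos ν),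
    Nat.coprime_comm, hp.coprime_iff_not_dvd, not_not]

private lemma pmul_eq_iff {p : ℕ} (hp : p.Prime) {ν : ℕ} (k : ℕ) (w : ZMod (p ^ (ν + 1))) :
    (p : ZMod (p ^ (ν + 1))) * w = ((p * k : ℕ) : ZMod (p ^ (ν + 1))) ↔
      ((w.val : ℕ) : ZMod (p ^ ν)) = (k : ZMod (p ^ ν)) := by
  haveI : NeZero (p ^ (ν + 1)) := ⟨pow_ne_zero _ hp.pos.ne'⟩
  have key : ∀ a : ℕ, (p * a ≡ p * k [MOD p ^ (ν + 1)] ↔ a ≡ k [MOD p ^ ν]) := by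
    intro a
    unfold Nat.ModEq
    rw [pow_succ, mul_comm (p ^ ν) p, Nat.mul_mod_mul_left, Nat.mul_mod_mul_left]
    exact ⟨fun h => Nat.eq_of_mul_eq_mul_left hp.pos h, fun h => by rw [h]⟩
  rw [ZMod.natCast_eq_natCast_iff]
  conv_lhs => rw [← zmod_natCast_val_self w]
  rw [show ((p : ZMod (p ^ (ν+1))) * ((w.val : ℕ) : ZMod (p ^ (ν+1))) = ((p * w.val : ℕ) : ZMod (p^(ν+1)))) by push_cast; ring,
    ZMod.natCast_eq_natCast_iff]
  exact key w.val


private lemma cast_p_pow_zero {p ν j : ℕ} (hj : ν ≤ j) : ((p : ZMod (p ^ ν))) ^ j = 0 := by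
  have h : ((p : ZMod (p ^ ν))) ^ ν = 0 := by rw [← Nat.cast_pow, ZMod.natCast_self]
  calc ((p : ZMod (p ^ ν))) ^ j = (p : ZMod (p ^ ν)) ^ ν * (p : ZMod (p ^ ν)) ^ (j - ν) := by
        rw [← pow_add]; congr 1; omega
    _ = 0 := by rw [h, zero_mul]

private lemma natCast_mod_pow_succ {p : ℕ} {ν : ℕ} (W : ℕ) :
    ((W % p ^ (ν + 1) : ℕ) : ZMod (p ^ ν)) = (W : ZMod (p ^ ν)) := by
  conv_rhs => rw [← Nat.div_add_mod W (p ^ (ν + 1))]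
  push_cast
  rw [cast_p_pow_zero (Nat.le_succ ν)]; ring
private lemma pdvd_val {p : ℕ} (hp : p.Prime) {ν : ℕ} (w : ZMod (p ^ (ν + 1))) :
    p ∣ ((p : ZMod (p ^ (ν + 1))) * w).val := by
  haveI : NeZero (p ^ (ν + 1)) := ⟨pow_ne_zero _ hp.pos.ne'⟩
  have h : (p : ZMod (p ^ (ν + 1))) * w = ((p * w.val : ℕ) : ZMod (p ^ (ν + 1))) := by
    conv_lhs => rw [← zmod_natCast_val_self w]
    push_cast; ring
  rw [h, ZMod.val_natCast]
  obtain ⟨a, ha⟩ : ∃ a, w.val = a := ⟨_, rfl⟩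
  rw [ha, pow_succ, mul_comm (p ^ ν) p, Nat.mul_mod_mul_left]
  exact ⟨_, rfl⟩

private lemma transfer_eq {p : ℕ} (hp : p.Prime) {ν : ℕ} (a₁ a₂ Y₁ Y₂ k : ℕ) :
    ((p * a₁ : ℕ) : ZMod (p ^ (ν + 1))) * (Y₁ : ZMod (p ^ (ν + 1)))
        + ((p * a₂ : ℕ) : ZMod (p ^ (ν + 1))) * (Y₂ : ZMod (p ^ (ν + 1)))
        = ((p * k : ℕ) : ZMod (p ^ (ν + 1))) ↔
      (a₁ : ZMod (p ^ ν)) * (Y₁ : ZMod (p ^ ν)) + (a₂ : ZMod (p ^ ν)) * (Y₂ : ZMod (p ^ ν))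
        = (k : ZMod (p ^ ν)) := by
  haveI : NeZero (p ^ (ν + 1)) := ⟨pow_ne_zero _ hp.pos.ne'⟩
  have h : ((p * a₁ : ℕ) : ZMod (p ^ (ν + 1))) * (Y₁ : ZMod (p ^ (ν + 1)))
        + ((p * a₂ : ℕ) : ZMod (p ^ (ν + 1))) * (Y₂ : ZMod (p ^ (ν + 1)))
      = (p : ZMod (p ^ (ν + 1))) * ((a₁ * Y₁ + a₂ * Y₂ : ℕ) : ZMod (p ^ (ν + 1))) := by
    push_cast; ring
  rw [h, pmul_eq_iff hp, ZMod.val_natCast, natCast_mod_pow_succ]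
  push_cast
  exact Iff.rfl

private lemma card_S3_empty {p : ℕ} (hp : p.Prime) {ν : ℕ} (c : ZMod (p ^ (ν + 1)))
    (hc : ¬ p ∣ c.val) :
    Nat.card {q : ZMod (p ^ (ν + 1)) × ZMod (p ^ (ν + 1)) × ZMod (p ^ (ν + 1)) × ZMod (p ^ (ν + 1)) //
      (q.1 * q.2.1 + q.2.2.1 * q.2.2.2 = c) ∧ ¬ IsUnit q.1 ∧ ¬ IsUnit q.2.2.1} = 0 := by
  haveI : NeZero (p ^ (ν + 1)) := ⟨pow_ne_zero _ hp.pos.ne'⟩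
  haveI : IsEmpty {q : ZMod (p ^ (ν + 1)) × ZMod (p ^ (ν + 1)) × ZMod (p ^ (ν + 1)) × ZMod (p ^ (ν + 1)) //
      (q.1 * q.2.1 + q.2.2.1 * q.2.2.2 = c) ∧ ¬ IsUnit q.1 ∧ ¬ IsUnit q.2.2.1} := by
    constructor
    rintro ⟨⟨x₁, y₁, x₂, y₂⟩, hsol, h1, h2⟩
    simp only at hsol h1 h2
    rw [nonunit_iff hp] at h1 h2
    apply hc
    have hx1 : x₁ = ((p * (x₁.val / p) : ℕ) : ZMod (p ^ (ν + 1))) := by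
      rw [Nat.mul_div_cancel' h1, zmod_natCast_val_self]
    have hx2 : x₂ = ((p * (x₂.val / p) : ℕ) : ZMod (p ^ (ν + 1))) := by
      rw [Nat.mul_div_cancel' h2, zmod_natCast_val_self]
    have : c = (p : ZMod (p ^ (ν + 1))) * (((x₁.val / p : ℕ) : ZMod (p ^ (ν + 1))) * y₁
        + ((x₂.val / p : ℕ) : ZMod (p ^ (ν + 1))) * y₂) := by
      rw [← hsol]; conv_lhs => rw [hx1, hx2]
      push_cast; ring
    rw [this]
    exact pdvd_val hp _
  exact Nat.card_of_isEmpty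
private lemma card_S3_count {p : ℕ} (hp : p.Prime) {ν : ℕ} (c : ZMod (p ^ (ν + 1)))
    (hc : p ∣ c.val) :
    Nat.card {q : ZMod (p ^ (ν + 1)) × ZMod (p ^ (ν + 1)) × ZMod (p ^ (ν + 1)) × ZMod (p ^ (ν + 1)) //
      (q.1 * q.2.1 + q.2.2.1 * q.2.2.2 = c) ∧ ¬ IsUnit q.1 ∧ ¬ IsUnit q.2.2.1} =
    gcount (p ^ ν) (((c.val / p : ℕ) : ZMod (p ^ ν))) * (p * p) := by
  haveI : NeZero (p ^ ν) := ⟨pow_ne_zero _ hp.pos.ne'⟩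
  haveI : NeZero (p ^ (ν + 1)) := ⟨pow_ne_zero _ hp.pos.ne'⟩
  obtain ⟨k, hk⟩ := hc
  have hk' : c.val / p = k := by rw [hk, Nat.mul_div_cancel_left _ hp.pos]
  have hc' : c = ((p * k : ℕ) : ZMod (p ^ (ν + 1))) := by rw [← hk, zmod_natCast_val_self]
  rw [hk']
  -- helper facts
  have hPpos : 0 < p ^ ν := pow_pos hp.pos ν
  have hxlt : ∀ a : ZMod (p ^ ν), p * a.val < p ^ (ν + 1) := by
    intro a
    rw [pow_succ, mul_comm (p ^ ν) p]
    exact (Nat.mul_lt_mul_left hp.pos).mpr (ZMod.val_lt a)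
  have hylt : ∀ (q : Fin p) (r : ZMod (p ^ ν)), (q : ℕ) * p ^ ν + r.val < p ^ (ν + 1) := by
    intro q r
    have h1 := q.isLt
    have h2 := ZMod.val_lt r
    rw [pow_succ]
    calc (q : ℕ) * p ^ ν + r.val < (q : ℕ) * p ^ ν + p ^ ν := by omega
      _ = ((q : ℕ) + 1) * p ^ ν := by ring
      _ ≤ p * p ^ ν := Nat.mul_le_mul_right _ (by omega)
      _ = p ^ ν * p := by ring
  have hY : ∀ (q : Fin p) (r : ZMod (p ^ ν)),
      ((((q : ℕ) * p ^ ν + r.val : ℕ)) : ZMod (p ^ ν)) = r := by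
    intro q r
    push_cast
    rw [cast_p_pow_zero (le_refl ν), zmod_natCast_val_self]
    ring
  have key := Nat.card_eq_of_bijective
    (f := fun s : {q : ZMod (p ^ ν) × ZMod (p ^ ν) × ZMod (p ^ ν) × ZMod (p ^ ν) //
        q.1 * q.2.1 + q.2.2.1 * q.2.2.2 = ((k : ℕ) : ZMod (p ^ ν))} × Fin p × Fin p =>
      (⟨(((p * s.1.1.1.val : ℕ) : ZMod (p ^ (ν + 1))),
         (((s.2.1 : ℕ) * p ^ ν + s.1.1.2.1.val : ℕ) : ZMod (p ^ (ν + 1))),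
         ((p * s.1.1.2.2.1.val : ℕ) : ZMod (p ^ (ν + 1))),
         (((s.2.2 : ℕ) * p ^ ν + s.1.1.2.2.2.val : ℕ) : ZMod (p ^ (ν + 1)))),
        by
          obtain ⟨⟨⟨a₁, r₁, a₂, r₂⟩, hs⟩, q₁, q₂⟩ := s
          simp only at hs ⊢
          refine ⟨?_, ?_, ?_⟩
          · rw [hc']
            rw [transfer_eq hp]
            rw [hY q₁ r₁, hY q₂ r₂, zmod_natCast_val_self, zmod_natCast_val_self]
            exact hs
          · rw [nonunit_iff hp, ZMod.val_natCast, Nat.mod_eq_of_lt (hxlt a₁)]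
            exact ⟨_, rfl⟩
          · rw [nonunit_iff hp, ZMod.val_natCast, Nat.mod_eq_of_lt (hxlt a₂)]
            exact ⟨_, rfl⟩⟩ :
       {q : ZMod (p ^ (ν + 1)) × ZMod (p ^ (ν + 1)) × ZMod (p ^ (ν + 1)) × ZMod (p ^ (ν + 1)) //
        (q.1 * q.2.1 + q.2.2.1 * q.2.2.2 = c) ∧ ¬ IsUnit q.1 ∧ ¬ IsUnit q.2.2.1})) ?_
  · rw [← key, Nat.card_prod, Nat.card_prod, Nat.card_eq_fintype_card (α := Fin p),
      Fintype.card_fin]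
    rfl
  constructor
  · rintro ⟨⟨⟨a₁, r₁, a₂, r₂⟩, hs⟩, q₁, q₂⟩ ⟨⟨⟨a₁', r₁', a₂', r₂'⟩, hs'⟩, q₁', q₂'⟩ h
    simp only [Subtype.mk.injEq, Prod.mk.injEq] at h
    obtain ⟨h1, h2, h3, h4⟩ := h
    have e1 : p * a₁.val = p * a₁'.val := by
      have := congrArg ZMod.val h1
      rwa [ZMod.val_natCast, ZMod.val_natCast, Nat.mod_eq_of_lt (hxlt a₁),
        Nat.mod_eq_of_lt (hxlt a₁')] at this
    have e3 : p * a₂.val = p * a₂'.val := by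
      have := congrArg ZMod.val h3
      rwa [ZMod.val_natCast, ZMod.val_natCast, Nat.mod_eq_of_lt (hxlt a₂),
        Nat.mod_eq_of_lt (hxlt a₂')] at this
    have e2 : (q₁ : ℕ) * p ^ ν + r₁.val = (q₁' : ℕ) * p ^ ν + r₁'.val := by
      have := congrArg ZMod.val h2
      rwa [ZMod.val_natCast, ZMod.val_natCast, Nat.mod_eq_of_lt (hylt q₁ r₁),
        Nat.mod_eq_of_lt (hylt q₁' r₁')] at this
    have e4 : (q₂ : ℕ) * p ^ ν + r₂.val = (q₂' : ℕ) * p ^ ν + r₂'.val := by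
      have := congrArg ZMod.val h4
      rwa [ZMod.val_natCast, ZMod.val_natCast, Nat.mod_eq_of_lt (hylt q₂ r₂),
        Nat.mod_eq_of_lt (hylt q₂' r₂')] at this
    have ea1 : a₁ = a₁' := by
      rw [← zmod_natCast_val_self a₁, ← zmod_natCast_val_self a₁',
        Nat.eq_of_mul_eq_mul_left hp.pos e1]
    have ea2 : a₂ = a₂' := by
      rw [← zmod_natCast_val_self a₂, ← zmod_natCast_val_self a₂',
        Nat.eq_of_mul_eq_mul_left hp.pos e3]
    have hdiv : ∀ (q : Fin p) (r : ZMod (p ^ ν)), ((q : ℕ) * p ^ ν + r.val) / p ^ ν = (q : ℕ) := by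
      intro q r
      rw [mul_comm, Nat.mul_add_div hPpos, Nat.div_eq_of_lt (ZMod.val_lt r), add_zero]
    have hmod : ∀ (q : Fin p) (r : ZMod (p ^ ν)), ((q : ℕ) * p ^ ν + r.val) % p ^ ν = r.val := by
      intro q r
      rw [mul_comm, Nat.mul_add_mod, Nat.mod_eq_of_lt (ZMod.val_lt r)]
    have hq1 : q₁ = q₁' := by
      have := congrArg (· / p ^ ν) e2
      rw [hdiv q₁ r₁, hdiv q₁' r₁'] at this
      exact Fin.ext this
    have hq2 : q₂ = q₂' := by
      have := congrArg (· / p ^ ν) e4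
      rw [hdiv q₂ r₂, hdiv q₂' r₂'] at this
      exact Fin.ext this
    have er1 : r₁ = r₁' := by
      have := congrArg (· % p ^ ν) e2
      rw [hmod q₁ r₁, hmod q₁' r₁'] at this
      rw [← zmod_natCast_val_self r₁, ← zmod_natCast_val_self r₁', this]
    have er2 : r₂ = r₂' := by
      have := congrArg (· % p ^ ν) e4
      rw [hmod q₂ r₂, hmod q₂' r₂'] at this
      rw [← zmod_natCast_val_self r₂, ← zmod_natCast_val_self r₂', this]
    refine Prod.ext (Subtype.ext ?_) (Prod.ext hq1 hq2)
    simp only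
    rw [ea1, ea2, er1, er2]
  · rintro ⟨⟨x₁, y₁, x₂, y₂⟩, hsol, h1, h2⟩
    simp only at hsol h1 h2
    rw [nonunit_iff hp] at h1 h2
    have hx1lt : x₁.val / p < p ^ ν :=
      (Nat.div_lt_iff_lt_mul hp.pos).mpr (by rw [← pow_succ]; exact ZMod.val_lt x₁)
    have hx2lt : x₂.val / p < p ^ ν :=
      (Nat.div_lt_iff_lt_mul hp.pos).mpr (by rw [← pow_succ]; exact ZMod.val_lt x₂)
    have hy1q : y₁.val / p ^ ν < p :=
      (Nat.div_lt_iff_lt_mul hPpos).mpr (by rw [mul_comm, ← pow_succ]; exact ZMod.val_lt y₁)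
    have hy2q : y₂.val / p ^ ν < p :=
      (Nat.div_lt_iff_lt_mul hPpos).mpr (by rw [mul_comm, ← pow_succ]; exact ZMod.val_lt y₂)
    have hsolD : (((x₁.val / p : ℕ) : ZMod (p ^ ν))) * ((y₁.val : ℕ) : ZMod (p ^ ν))
        + (((x₂.val / p : ℕ) : ZMod (p ^ ν))) * ((y₂.val : ℕ) : ZMod (p ^ ν))
        = ((k : ℕ) : ZMod (p ^ ν)) := by
      refine (transfer_eq hp (x₁.val / p) (x₂.val / p) y₁.val y₂.val k).mp ?_
      rw [Nat.mul_div_cancel' h1, Nat.mul_div_cancel' h2, zmod_natCast_val_self,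
        zmod_natCast_val_self, zmod_natCast_val_self, zmod_natCast_val_self, ← hc']
      exact hsol
    refine ⟨⟨⟨(((x₁.val / p : ℕ) : ZMod (p ^ ν)), ((y₁.val : ℕ) : ZMod (p ^ ν)),
      ((x₂.val / p : ℕ) : ZMod (p ^ ν)), ((y₂.val : ℕ) : ZMod (p ^ ν))), hsolD⟩,
      ⟨y₁.val / p ^ ν, hy1q⟩, ⟨y₂.val / p ^ ν, hy2q⟩⟩, ?_⟩
    apply Subtype.ext
    simp only
    have hxcomp : ∀ (x : ZMod (p ^ (ν + 1))) (hx : p ∣ x.val) (hlt : x.val / p < p ^ ν),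
        ((p * (((x.val / p : ℕ) : ZMod (p ^ ν))).val : ℕ) : ZMod (p ^ (ν + 1))) = x := by
      intro x hx hlt
      rw [ZMod.val_natCast, Nat.mod_eq_of_lt hlt, Nat.mul_div_cancel' hx, zmod_natCast_val_self]
    have hycomp : ∀ (y : ZMod (p ^ (ν + 1))),
        (((y.val / p ^ ν) * p ^ ν + (((y.val : ℕ) : ZMod (p ^ ν))).val : ℕ) : ZMod (p ^ (ν + 1))) = y := by
      intro y
      rw [ZMod.val_natCast, mul_comm, Nat.div_add_mod, zmod_natCast_val_self]
    exact Prod.ext (hxcomp x₁ h1 hx1lt) (Prod.ext (hycomp y₁) (Prod.ext (hxcomp x₂ h2 hx2lt) (hycomp y₂)))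
private lemma arith_lower_rec (d A g : ℕ) (ih1 : A^3*(d+1)^2 ≤ (d+1)^2*g + A^3) :
    A^3*(d+1)^5 ≤ (d+1)^2*(A*d*(A*(d+1)*(A*(d+1))) + A*(A*d*(A*(d+1))) + g*((d+1)*(d+1)))
      + A^3*(d+1)^3 := by
  have h1 : A^3*(d+1)^2 ≤ A^3*(d+1)^3 :=
    Nat.mul_le_mul_left _ (Nat.pow_le_pow_right (Nat.le_add_left 1 d) (by omega))
  nlinarith [mul_le_mul_left ih1 ((d+1)^2), h1]

private lemma arith_upper_rec (d A g : ℕ) (ih2 : (d+1)*g ≤ A^3*(d+1)^1 + A^3) :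
    (d+1)*(A*d*(A*(d+1)*(A*(d+1))) + A*(A*d*(A*(d+1))) + g*((d+1)*(d+1)))
      ≤ A^3*(d+1)^4 + A^3*(d+1)^3 := by
  nlinarith [mul_le_mul_left ih2 ((d+1)^2)]

private lemma arith_lower_emp (d A : ℕ) :
    A^3*(d+1)^5 ≤ (d+1)^2*(A*d*(A*(d+1)*(A*(d+1))) + A*(A*d*(A*(d+1))) + 0) + A^3*(d+1)^3 := by
  nlinarith []

private lemma arith_upper_emp (d A : ℕ) :
    (d+1)*(A*d*(A*(d+1)*(A*(d+1))) + A*(A*d*(A*(d+1))) + 0) ≤ A^3*(d+1)^4 + A^3*(d+1)^3 := by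
  have h1 : A^3*((d+1)^3*d) ≤ A^3*((d+1)^3*(d+1)) :=
    Nat.mul_le_mul_left _ (Nat.mul_le_mul_left _ (by omega))
  have h2 : A^3*((d+1)^2*d) ≤ A^3*((d+1)^2*(d+1)) :=
    Nat.mul_le_mul_left _ (Nat.mul_le_mul_left _ (by omega))
  nlinarith [h1, h2]
private lemma gcount_bounds {p : ℕ} (hp : p.Prime) :
    ∀ ν : ℕ, ∀ c : ZMod (p ^ ν),
      p ^ (3 * ν + 2) ≤ p ^ 2 * gcount (p ^ ν) c + p ^ (3 * ν) ∧
      p * gcount (p ^ ν) c ≤ p ^ (3 * ν + 1) + p ^ (3 * ν) := by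
  intro ν
  induction ν with
  | zero =>
    rw [pow_zero]
    intro c
    have h1 : gcount 1 c = 1 := by
      have : Nonempty {q : ZMod 1 × ZMod 1 × ZMod 1 × ZMod 1 //
          q.1 * q.2.1 + q.2.2.1 * q.2.2.2 = c} :=
        ⟨⟨(0, 0, 0, 0), Subsingleton.elim _ _⟩⟩
      exact Nat.card_unique
    rw [h1]
    simp only [Nat.mul_zero, Nat.zero_add, pow_zero, mul_one, pow_one]
    omega
  | succ ν ih =>
    intro c
    haveI : NeZero (p ^ ν) := ⟨pow_ne_zero _ hp.pos.ne'⟩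
    haveI : NeZero (p ^ (ν + 1)) := ⟨pow_ne_zero _ hp.pos.ne'⟩
    have split1 := card_split (α := ZMod (p ^ (ν+1)) × ZMod (p ^ (ν+1)) × ZMod (p ^ (ν+1)) × ZMod (p ^ (ν+1)))
      (fun q => q.1 * q.2.1 + q.2.2.1 * q.2.2.2 = c) (fun q => IsUnit q.1)
    have split2 := card_split (α := ZMod (p ^ (ν+1)) × ZMod (p ^ (ν+1)) × ZMod (p ^ (ν+1)) × ZMod (p ^ (ν+1)))
      (fun q => (q.1 * q.2.1 + q.2.2.1 * q.2.2.2 = c) ∧ ¬ IsUnit q.1)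
      (fun q => IsUnit q.2.2.1)
    have e2 : Nat.card {q : ZMod (p ^ (ν+1)) × ZMod (p ^ (ν+1)) × ZMod (p ^ (ν+1)) × ZMod (p ^ (ν+1)) //
        ((q.1 * q.2.1 + q.2.2.1 * q.2.2.2 = c) ∧ ¬ IsUnit q.1) ∧ IsUnit q.2.2.1} =
        Nat.card {q : ZMod (p ^ (ν+1)) × ZMod (p ^ (ν+1)) × ZMod (p ^ (ν+1)) × ZMod (p ^ (ν+1)) //
        (q.1 * q.2.1 + q.2.2.1 * q.2.2.2 = c) ∧ ¬ IsUnit q.1 ∧ IsUnit q.2.2.1} :=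
      Nat.card_congr (Equiv.subtypeEquivRight fun q => by tauto)
    have e3 : Nat.card {q : ZMod (p ^ (ν+1)) × ZMod (p ^ (ν+1)) × ZMod (p ^ (ν+1)) × ZMod (p ^ (ν+1)) //
        ((q.1 * q.2.1 + q.2.2.1 * q.2.2.2 = c) ∧ ¬ IsUnit q.1) ∧ ¬ IsUnit q.2.2.1} =
        Nat.card {q : ZMod (p ^ (ν+1)) × ZMod (p ^ (ν+1)) × ZMod (p ^ (ν+1)) × ZMod (p ^ (ν+1)) //
        (q.1 * q.2.1 + q.2.2.1 * q.2.2.2 = c) ∧ ¬ IsUnit q.1 ∧ ¬ IsUnit q.2.2.1} :=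
      Nat.card_congr (Equiv.subtypeEquivRight fun q => by tauto)
    have htot : (p ^ (ν + 1)).totient = p ^ ν * (p - 1) := by
      rw [Nat.totient_prime_pow hp (Nat.succ_pos ν)]
      simp
    have hNU : Nat.card {x : ZMod (p ^ (ν + 1)) // ¬ IsUnit x} = p ^ ν := by
      rw [card_nonUnit, htot]
      have h1 : 1 ≤ p := hp.pos
      have h2 : p ^ (ν + 1) = p ^ ν * p := pow_succ p ν
      have h3 : p ^ ν * (p - 1) + p ^ ν = p ^ ν * p := by
        calc p ^ ν * (p - 1) + p ^ ν = p ^ ν * ((p - 1) + 1) := by ring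
          _ = p ^ ν * p := by congr 1; omega
      omega
    have total : gcount (p ^ (ν + 1)) c =
        (p ^ (ν + 1)).totient * (p ^ (ν + 1) * p ^ (ν + 1))
        + p ^ ν * ((p ^ (ν + 1)).totient * p ^ (ν + 1))
        + Nat.card {q : ZMod (p ^ (ν+1)) × ZMod (p ^ (ν+1)) × ZMod (p ^ (ν+1)) × ZMod (p ^ (ν+1)) //
          (q.1 * q.2.1 + q.2.2.1 * q.2.2.2 = c) ∧ ¬ IsUnit q.1 ∧ ¬ IsUnit q.2.2.1} := by
      unfold gcount
      rw [split1, split2, e2, e3, card_unit1, card_unit2, hNU]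
      omega
    rw [htot] at total
    have hMM : p ^ (ν + 1) * p ^ (ν + 1) = p ^ ν * p * (p ^ ν * p) := by rw [pow_succ]
    have hM1 : p ^ ν * (p - 1) * (p ^ (ν + 1) * p ^ (ν + 1))
        = p ^ ν * (p - 1) * (p ^ ν * p * (p ^ ν * p)) := by rw [hMM]
    have hM2 : p ^ ν * (p ^ ν * (p - 1) * p ^ (ν + 1)) = p ^ ν * (p ^ ν * (p - 1) * (p ^ ν * p)) := by
      rw [pow_succ]
    rw [hM1, hM2] at total
    have hexp5 : p ^ (3 * (ν + 1) + 2) = (p ^ ν) ^ 3 * p ^ 5 := by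
      rw [← pow_mul, ← pow_add]; congr 1; ring
    have hexp4 : p ^ (3 * (ν + 1) + 1) = (p ^ ν) ^ 3 * p ^ 4 := by
      rw [← pow_mul, ← pow_add]; congr 1; ring
    have hexp0 : p ^ (3 * (ν + 1)) = (p ^ ν) ^ 3 * p ^ 3 := by
      rw [← pow_mul, ← pow_add]; congr 1; ring
    have hexpν : ∀ k : ℕ, p ^ (3 * ν + k) = (p ^ ν) ^ 3 * p ^ k := by
      intro k; rw [← pow_mul, ← pow_add]; congr 1; ring
    have hexpν0 : p ^ (3 * ν) = (p ^ ν) ^ 3 := by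
      rw [← pow_mul]; congr 1; ring
    by_cases hdvd : p ∣ c.val
    · rw [card_S3_count hp c hdvd] at total
      obtain ⟨ih1, ih2⟩ := ih (((c.val / p : ℕ) : ZMod (p ^ ν)))
      rw [hexpν 2, hexpν0] at ih1
      rw [hexpν 1, hexpν0] at ih2
      obtain ⟨d, rfl⟩ : ∃ d, p = d + 1 := ⟨p - 1, by have := hp.two_le; omega⟩
      rw [show (d + 1) - 1 = d from by omega] at total
      constructor
      · rw [hexp5, hexp0, total]
        exact arith_lower_rec d ((d + 1) ^ ν) _ ih1
      · rw [hexp4, hexp0, total]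
        exact arith_upper_rec d ((d + 1) ^ ν) _ ih2
    · rw [card_S3_empty hp c hdvd] at total
      obtain ⟨d, rfl⟩ : ∃ d, p = d + 1 := ⟨p - 1, by have := hp.two_le; omega⟩
      rw [show (d + 1) - 1 = d from by omega] at total
      constructor
      · rw [hexp5, hexp0, total]
        exact arith_lower_emp d ((d + 1) ^ ν)
      · rw [hexp4, hexp0, total]
        exact arith_upper_emp d ((d + 1) ^ ν)
private lemma card_prod_subtype {A B : Type*} [Fintype A] [Fintype B] (C : A × B → Prop) :
    Nat.card {t : A × B // C t} = ∑ a : A, Nat.card {b : B // C (a, b)} := by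
  classical
  have e : {t : A × B // C t} ≃ Σ a : A, {b : B // C (a, b)} :=
    { toFun := fun t => ⟨t.1.1, t.1.2, t.2⟩
      invFun := fun s => ⟨(s.1, s.2.1), s.2.2⟩
      left_inv := fun t => rfl
      right_inv := fun s => rfl }
  rw [Nat.card_congr e, Nat.card_eq_fintype_card, Fintype.card_sigma]
  congr 1
  ext a
  rw [Nat.card_eq_fintype_card]

set_option maxHeartbeats 1000000

/-- Representation number bounds for a lattice splitting off two hyperbolic planes:
if `Q₀` is an integral quadratic form on `ℤⁿ`, `μ₀` a dual vector and `m ≡ Q₀(μ₀) (mod ℤ)`,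
then the number `N` of residues `(λ,x₁,y₁,x₂,y₂)` mod `p^ν` with
`Q₀(λ+μ₀) + x₁y₁ + x₂y₂ ≡ m (mod p^ν)` satisfies
`(1-p⁻²) p^{(n+3)ν} ≤ N ≤ (1+p⁻¹) p^{(n+3)ν}`. -/
theorem repNumber_splits_two_hyperbolic_planes_bounds
    (n : ℕ) (Q₀ : QuadraticForm ℚ (Fin n → ℚ))
    (hQint : ∀ v : Fin n → ℤ, ∃ z : ℤ, Q₀ (fun i => (v i : ℚ)) = (z : ℚ))
    (μ₀ : Fin n → ℚ)
    (hμint : ∀ v : Fin n → ℤ, ∃ z : ℤ,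
      QuadraticMap.polar Q₀ μ₀ (fun i => (v i : ℚ)) = (z : ℚ))
    (m : ℚ) (hm : ∃ z : ℤ, m - Q₀ μ₀ = (z : ℚ))
    (p : ℕ) (hp : p.Prime) (ν : ℕ) :
    (1 - ((p : ℚ) ^ 2)⁻¹) * (p : ℚ) ^ ((n + 3) * ν) ≤
      (Nat.card {t : (Fin n → Fin (p ^ ν)) × Fin (p ^ ν) × Fin (p ^ ν) × Fin (p ^ ν) × Fin (p ^ ν) //
        ∃ z : ℤ, Q₀ (fun i => (t.1 i : ℚ) + μ₀ i)
            + (t.2.1 : ℚ) * (t.2.2.1 : ℚ) + (t.2.2.2.1 : ℚ) * (t.2.2.2.2 : ℚ) - m = (z : ℚ)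
          ∧ (p : ℤ) ^ ν ∣ z} : ℚ) ∧
    (Nat.card {t : (Fin n → Fin (p ^ ν)) × Fin (p ^ ν) × Fin (p ^ ν) × Fin (p ^ ν) × Fin (p ^ ν) //
        ∃ z : ℤ, Q₀ (fun i => (t.1 i : ℚ) + μ₀ i)
            + (t.2.1 : ℚ) * (t.2.2.1 : ℚ) + (t.2.2.2.1 : ℚ) * (t.2.2.2.2 : ℚ) - m = (z : ℚ)
          ∧ (p : ℤ) ^ ν ∣ z} : ℚ)
      ≤ (1 + (p : ℚ)⁻¹) * (p : ℚ) ^ ((n + 3) * ν) := by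
  classical
  haveI : NeZero (p ^ ν) := ⟨pow_ne_zero _ hp.pos.ne'⟩
  set C : ((Fin n → Fin (p ^ ν)) × Fin (p ^ ν) × Fin (p ^ ν) × Fin (p ^ ν) × Fin (p ^ ν)) → Prop :=
    fun t => ∃ z : ℤ, Q₀ (fun i => (t.1 i : ℚ) + μ₀ i)
            + (t.2.1 : ℚ) * (t.2.2.1 : ℚ) + (t.2.2.2.1 : ℚ) * (t.2.2.2.2 : ℚ) - m = (z : ℚ)
          ∧ (p : ℤ) ^ ν ∣ z with hC
  -- integral weight for each lambda
  have hw : ∀ lam : Fin n → Fin (p ^ ν), ∃ w : ℤ,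
      Q₀ (fun i => (lam i : ℚ) + μ₀ i) - m = (w : ℚ) := by
    intro lam
    obtain ⟨z₁, hz₁⟩ := hQint (fun i => ((lam i : ℕ) : ℤ))
    obtain ⟨z₂, hz₂⟩ := hμint (fun i => ((lam i : ℕ) : ℤ))
    obtain ⟨zm, hzm⟩ := hm
    have harg : (fun i => ((((fun i => ((lam i : ℕ) : ℤ)) i : ℤ)) : ℚ)) = fun i => ((lam i : ℚ)) := by
      funext i
      push_cast
      rfl
    rw [harg] at hz₁ hz₂
    refine ⟨z₁ + z₂ - zm, ?_⟩
    have hsplit : Q₀ (fun i => (lam i : ℚ) + μ₀ i)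
        = Q₀ (fun i => ((lam i : ℚ))) + Q₀ μ₀
          + QuadraticMap.polar Q₀ (fun i => ((lam i : ℚ))) μ₀ :=
      QuadraticMap.map_add Q₀ (fun i => ((lam i : ℚ))) μ₀
    rw [hsplit, QuadraticMap.polar_comm, hz₁, hz₂]
    push_cast
    linarith [hzm]
  choose w hwspec using hw
  -- the per-fiber count equals gcount
  have hfib : ∀ lam : Fin n → Fin (p ^ ν),
      Nat.card {r : Fin (p ^ ν) × Fin (p ^ ν) × Fin (p ^ ν) × Fin (p ^ ν) // C (lam, r)} =
      gcount (p ^ ν) (((-(w lam) : ℤ)) : ZMod (p ^ ν)) := by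
    intro lam
    have hCiff : ∀ r : Fin (p ^ ν) × Fin (p ^ ν) × Fin (p ^ ν) × Fin (p ^ ν),
        C (lam, r) ↔
        (((r.1.val * r.2.1.val + r.2.2.1.val * r.2.2.2.val : ℕ)) : ZMod (p ^ ν))
          = (((-(w lam) : ℤ)) : ZMod (p ^ ν)) := by
      intro r
      constructor
      · rintro ⟨z, hz, hdvd⟩
        have hz' : z = w lam + (r.1.val * r.2.1.val + r.2.2.1.val * r.2.2.2.val : ℕ) := by
          have h0 := hwspec lam
          have : (z : ℚ) = (w lam : ℚ) + ((r.1.val * r.2.1.val + r.2.2.1.val * r.2.2.2.val : ℕ) : ℚ) := by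
            push_cast
            push_cast at hz h0
            linarith [hz, h0]
          exact_mod_cast this
        have hz0 : ((z : ℤ) : ZMod (p ^ ν)) = 0 := by
          rw [ZMod.intCast_zmod_eq_zero_iff_dvd]
          push_cast
          exact hdvd
        rw [hz'] at hz0
        push_cast at hz0 ⊢
        linear_combination hz0
      · intro h
        refine ⟨w lam + (r.1.val * r.2.1.val + r.2.2.1.val * r.2.2.2.val : ℕ), ?_, ?_⟩
        · have h0 := hwspec lam
          push_cast
          push_cast at h0
          linarith [h0]
        · have hz0 : (((w lam + (r.1.val * r.2.1.val + r.2.2.1.val * r.2.2.2.val : ℕ) : ℤ)) : ZMod (p ^ ν)) = 0 := by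
            push_cast
            push_cast at h
            linear_combination h
          rw [ZMod.intCast_zmod_eq_zero_iff_dvd] at hz0
          push_cast at hz0
          exact hz0
    have key := Nat.card_eq_of_bijective
      (f := fun s : {r : Fin (p ^ ν) × Fin (p ^ ν) × Fin (p ^ ν) × Fin (p ^ ν) // C (lam, r)} =>
        (⟨(((s.1.1.val : ℕ) : ZMod (p ^ ν)), ((s.1.2.1.val : ℕ) : ZMod (p ^ ν)),
           ((s.1.2.2.1.val : ℕ) : ZMod (p ^ ν)), ((s.1.2.2.2.val : ℕ) : ZMod (p ^ ν))),
          by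
            have h := (hCiff s.1).mp s.2
            push_cast at h ⊢
            linear_combination h⟩ :
          {q : ZMod (p ^ ν) × ZMod (p ^ ν) × ZMod (p ^ ν) × ZMod (p ^ ν) //
            q.1 * q.2.1 + q.2.2.1 * q.2.2.2 = (((-(w lam) : ℤ)) : ZMod (p ^ ν))})) ?_
    · rw [key]
      rfl
    constructor
    · rintro ⟨⟨a₁, b₁, a₂, b₂⟩, hr⟩ ⟨⟨a₁', b₁', a₂', b₂'⟩, hr'⟩ h
      simp only [Subtype.mk.injEq, Prod.mk.injEq] at h
      obtain ⟨h1, h2, h3, h4⟩ := h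
      have v1 : a₁.val = a₁'.val := by
        have := congrArg ZMod.val h1
        rwa [ZMod.val_cast_of_lt a₁.isLt, ZMod.val_cast_of_lt a₁'.isLt] at this
      have v2 : b₁.val = b₁'.val := by
        have := congrArg ZMod.val h2
        rwa [ZMod.val_cast_of_lt b₁.isLt, ZMod.val_cast_of_lt b₁'.isLt] at this
      have v3 : a₂.val = a₂'.val := by
        have := congrArg ZMod.val h3
        rwa [ZMod.val_cast_of_lt a₂.isLt, ZMod.val_cast_of_lt a₂'.isLt] at this
      have v4 : b₂.val = b₂'.val := by
        have := congrArg ZMod.val h4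
        rwa [ZMod.val_cast_of_lt b₂.isLt, ZMod.val_cast_of_lt b₂'.isLt] at this
      apply Subtype.ext
      simp only [Prod.mk.injEq]
      exact ⟨Fin.ext v1, Fin.ext v2, Fin.ext v3, Fin.ext v4⟩
    · rintro ⟨⟨q₁, q₂, q₃, q₄⟩, hq⟩
      refine ⟨⟨(⟨q₁.val, ZMod.val_lt q₁⟩, ⟨q₂.val, ZMod.val_lt q₂⟩,
        ⟨q₃.val, ZMod.val_lt q₃⟩, ⟨q₄.val, ZMod.val_lt q₄⟩), ?_⟩, ?_⟩
      · refine (hCiff _).mpr ?_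
        simp only at hq ⊢
        push_cast
        rw [zmod_natCast_val_self q₁, zmod_natCast_val_self q₂,
          zmod_natCast_val_self q₃, zmod_natCast_val_self q₄]
        exact_mod_cast hq
      · apply Subtype.ext
        simp only [Prod.mk.injEq]
        exact ⟨zmod_natCast_val_self q₁, zmod_natCast_val_self q₂,
          zmod_natCast_val_self q₃, zmod_natCast_val_self q₄⟩
  -- total count as a sum over lambda
  have hsum : Nat.card {t : (Fin n → Fin (p ^ ν)) × Fin (p ^ ν) × Fin (p ^ ν) × Fin (p ^ ν) × Fin (p ^ ν) // C t}
      = ∑ lam : Fin n → Fin (p ^ ν), gcount (p ^ ν) (((-(w lam) : ℤ)) : ZMod (p ^ ν)) := by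
    rw [card_prod_subtype C]
    exact Finset.sum_congr rfl fun lam _ => hfib lam
  -- rational bounds per fiber
  have hppos : (0 : ℚ) < (p : ℚ) := by exact_mod_cast hp.pos
  have hp2pos : (0 : ℚ) < (p : ℚ) ^ 2 := by positivity
  have hlow : ∀ lam : Fin n → Fin (p ^ ν),
      (1 - ((p : ℚ) ^ 2)⁻¹) * (p : ℚ) ^ (3 * ν) ≤
        (gcount (p ^ ν) (((-(w lam) : ℤ)) : ZMod (p ^ ν)) : ℚ) := by
    intro lam
    obtain ⟨h1, _⟩ := gcount_bounds hp ν (((-(w lam) : ℤ)) : ZMod (p ^ ν))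
    have h1' : ((p : ℚ)) ^ (3 * ν + 2) ≤ (p : ℚ) ^ 2 * (gcount (p ^ ν) (((-(w lam) : ℤ)) : ZMod (p ^ ν)) : ℚ) + (p : ℚ) ^ (3 * ν) := by
      exact_mod_cast h1
    rw [← mul_le_mul_iff_right₀ hp2pos]
    have hinv : (p : ℚ) ^ 2 * ((p : ℚ) ^ 2)⁻¹ = 1 := mul_inv_cancel₀ (ne_of_gt hp2pos)
    have hid : (p : ℚ) ^ 2 * ((1 - ((p : ℚ) ^ 2)⁻¹) * (p : ℚ) ^ (3 * ν))
        = (p : ℚ) ^ (3 * ν + 2) - (p : ℚ) ^ (3 * ν) := by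
      rw [pow_add]
      field_simp
    rw [hid]
    linarith [h1']
  have hhigh : ∀ lam : Fin n → Fin (p ^ ν),
      (gcount (p ^ ν) (((-(w lam) : ℤ)) : ZMod (p ^ ν)) : ℚ) ≤
        (1 + ((p : ℚ))⁻¹) * (p : ℚ) ^ (3 * ν) := by
    intro lam
    obtain ⟨_, h2⟩ := gcount_bounds hp ν (((-(w lam) : ℤ)) : ZMod (p ^ ν))
    have h2' : (p : ℚ) * (gcount (p ^ ν) (((-(w lam) : ℤ)) : ZMod (p ^ ν)) : ℚ)
        ≤ (p : ℚ) ^ (3 * ν + 1) + (p : ℚ) ^ (3 * ν) := by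
      exact_mod_cast h2
    rw [← mul_le_mul_iff_right₀ hppos]
    have hid : (p : ℚ) * ((1 + ((p : ℚ))⁻¹) * (p : ℚ) ^ (3 * ν))
        = (p : ℚ) ^ (3 * ν + 1) + (p : ℚ) ^ (3 * ν) := by
      rw [pow_add]
      field_simp
    rw [hid]
    exact h2'
  -- assemble
  have hcard : (Fintype.card (Fin n → Fin (p ^ ν)) : ℚ) = ((p : ℚ) ^ ν) ^ n := by
    rw [Fintype.card_fun, Fintype.card_fin, Fintype.card_fin]
    push_cast
    ring
  have hexp : ((p : ℚ) ^ ν) ^ n * (p : ℚ) ^ (3 * ν) = (p : ℚ) ^ ((n + 3) * ν) := by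
    rw [← pow_mul, ← pow_add]
    congr 1
    ring
  have hcast : (Nat.card {t : (Fin n → Fin (p ^ ν)) × Fin (p ^ ν) × Fin (p ^ ν) × Fin (p ^ ν) × Fin (p ^ ν) // C t} : ℚ)
      = ∑ lam : Fin n → Fin (p ^ ν), (gcount (p ^ ν) (((-(w lam) : ℤ)) : ZMod (p ^ ν)) : ℚ) := by
    rw [hsum]
    push_cast
    rfl
  constructor
  · rw [hcast]
    calc (1 - ((p : ℚ) ^ 2)⁻¹) * (p : ℚ) ^ ((n + 3) * ν)
        = (Finset.univ : Finset (Fin n → Fin (p ^ ν))).card • ((1 - ((p : ℚ) ^ 2)⁻¹) * (p : ℚ) ^ (3 * ν)) := by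
          rw [nsmul_eq_mul, Finset.card_univ, hcard, ← hexp]
          ring
      _ ≤ ∑ lam : Fin n → Fin (p ^ ν), (gcount (p ^ ν) (((-(w lam) : ℤ)) : ZMod (p ^ ν)) : ℚ) :=
          Finset.card_nsmul_le_sum _ _ _ (fun lam _ => hlow lam)
  · rw [hcast]
    calc ∑ lam : Fin n → Fin (p ^ ν), (gcount (p ^ ν) (((-(w lam) : ℤ)) : ZMod (p ^ ν)) : ℚ)
        ≤ (Finset.univ : Finset (Fin n → Fin (p ^ ν))).card • ((1 + ((p : ℚ))⁻¹) * (p : ℚ) ^ (3 * ν)) :=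
          Finset.sum_le_card_nsmul _ _ _ (fun lam _ => hhigh lam)
      _ = (1 + ((p : ℚ))⁻¹) * (p : ℚ) ^ ((n + 3) * ν) := by
          rw [nsmul_eq_mul, Finset.card_univ, hcard, ← hexp]
          ring
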